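/- (One-sided t Bayes factor.) For every ν > 0, τ > 0, r ≥ 1 and t ∈ ℝ, with y = τt/√((ν+t²)(1+τ²)) and c = (1+τ²)^{−(r+1/2)}: ∫_0^∞ f_{ν,λ}(t) j⁺(λ|τ²,r) dλ = f_ν(t) · c · [ ₂F₁((ν+1)/2, r+1/2, 1/2; y²) + 2y · (Γ(ν/2+1)/Γ((ν+1)/2)) · (Γ(r+1)/Γ(r+1/2)) · ₂F₁(ν/2+1, r+1, 3/2; y²) ]. -/

import Mathlib

open Real MeasureTheory Filter

/-- Rising factorial (Pochhammer symbol) `(a)_k`. -/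
noncomputable def risingFac (a : ℝ) (k : ℕ) : ℝ := (ascPochhammer ℝ k).eval a

/-- Gaussian hypergeometric function `₂F₁(a, b, c; x)` (as a series). -/
noncomputable def twoF1 (a b c x : ℝ) : ℝ :=
  ∑' k : ℕ, (risingFac a k * risingFac b k / (risingFac c k * (Nat.factorial k : ℝ))) * x ^ k

/-- Central `t` density with `ν` degrees of freedom. -/
noncomputable def tPdf (ν t : ℝ) : ℝ :=
  Real.Gamma ((ν + 1) / 2) / (Real.sqrt (ν * Real.pi) * Real.Gamma (ν / 2)) *
    (1 + t ^ 2 / ν) ^ (-((ν + 1) / 2))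

/-- Noncentral `t` density with `ν` degrees of freedom and noncentrality `lam`. -/
noncomputable def nctPdf (ν lam t : ℝ) : ℝ :=
  tPdf ν t * Real.exp (-lam ^ 2 / 2) *
    ((∑' k : ℕ, (risingFac ((ν + 1) / 2) k / (risingFac (1 / 2) k * (Nat.factorial k : ℝ))) *
        (lam ^ 2 * t ^ 2 / (2 * (t ^ 2 + ν))) ^ k)
      + (Real.sqrt 2 * lam * t * Real.Gamma (ν / 2 + 1)) /
          (Real.sqrt (t ^ 2 + ν) * Real.Gamma ((ν + 1) / 2)) *
        ∑' k : ℕ, (risingFac (ν / 2 + 1) k / (risingFac (3 / 2) k * (Nat.factorial k : ℝ))) *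
          (lam ^ 2 * t ^ 2 / (2 * (t ^ 2 + ν))) ^ k)

/-- Normal-moment density `j(λ | τ², r)` of order `r`. -/
noncomputable def normalMomentPdf (τ r l : ℝ) : ℝ :=
  (l ^ 2) ^ r / ((2 * τ ^ 2) ^ (r + 1 / 2) * Real.Gamma (r + 1 / 2)) *
    Real.exp (-l ^ 2 / (2 * τ ^ 2))

/-- One-sided normal-moment density `j⁺(λ | τ², r) = 2 j(λ | τ², r)` on `(0, ∞)`. -/
noncomputable def normalMomentPdfPos (τ r l : ℝ) : ℝ := 2 * normalMomentPdf τ r l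

/-! ### Auxiliary lemmas -/

lemma risingFac_zero (a : ℝ) : risingFac a 0 = 1 := by simp [risingFac]

lemma risingFac_succ (a : ℝ) (k : ℕ) : risingFac a (k + 1) = risingFac a k * (a + k) := by
  simp [risingFac, ascPochhammer_succ_right]

lemma risingFac_pos {a : ℝ} (ha : 0 < a) (k : ℕ) : 0 < risingFac a k := by
  induction k with
  | zero => simp [risingFac_zero]
  | succ n ih => rw [risingFac_succ]; exact mul_pos ih (by positivity)

lemma Gamma_risingFac {a : ℝ} (ha : 0 < a) (k : ℕ) :
    Real.Gamma (a + k) = Real.Gamma a * risingFac a k := by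
  induction k with
  | zero => simp [risingFac_zero]
  | succ n ih =>
    have h1 : a + ((n : ℝ) + 1) = (a + n) + 1 := by ring
    push_cast
    rw [h1, Real.Gamma_add_one (by positivity), ih, risingFac_succ]
    ring

lemma tendsto_shift_div {A C : ℝ} (hC : 0 < C) :
    Tendsto (fun k : ℕ => (A + k) / (C + k)) atTop (nhds 1) := by
  have hat : Tendsto (fun k : ℕ => C + (k : ℝ)) atTop atTop :=
    tendsto_atTop_add_const_left _ C tendsto_natCast_atTop_atTop
  have h0 : Tendsto (fun k : ℕ => (A - C) / (C + (k : ℝ))) atTop (nhds 0) :=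
    Tendsto.div_atTop tendsto_const_nhds hat
  have h1 : Tendsto (fun k : ℕ => (A - C) / (C + (k : ℝ)) + 1) atTop (nhds 1) := by
    simpa using h0.add tendsto_const_nhds
  refine h1.congr fun k => ?_
  have hk : C + (k : ℝ) ≠ 0 := by positivity
  field_simp
  ring

lemma summable_of_ratio_aux {f q : ℕ → ℝ} (hf : ∀ k, 0 ≤ f k)
    (hrec : ∀ k, f (k + 1) = f k * q k) {x : ℝ} (hx : x < 1)
    (hq : Tendsto q atTop (nhds x)) : Summable f := by
  set ρ : ℝ := (max x 0 + 1) / 2 with hρ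
  have hρ1 : ρ < 1 := by
    simp only [hρ]
    linarith [max_lt hx one_pos]
  have hxρ : x < ρ := by
    have h1 : x ≤ max x 0 := le_max_left _ _
    have h2 : max x 0 < 1 := max_lt hx one_pos
    simp only [hρ]; linarith
  refine summable_of_ratio_norm_eventually_le hρ1 ?_
  filter_upwards [hq.eventually_lt_const hxρ] with k hk
  rw [Real.norm_eq_abs, Real.norm_eq_abs, abs_of_nonneg (hf _), abs_of_nonneg (hf _), hrec k,
    mul_comm ρ (f k)]
  exact mul_le_mul_of_nonneg_left hk.le (hf k)

lemma summable_hyp {A B C x : ℝ} (hA : 0 < A) (hB : 0 < B) (hC : 0 < C)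
    (hx0 : 0 ≤ x) (hx1 : x < 1) :
    Summable (fun k : ℕ =>
      risingFac A k * risingFac B k / (risingFac C k * (Nat.factorial k : ℝ)) * x ^ k) := by
  refine summable_of_ratio_aux (f := fun k =>
      risingFac A k * risingFac B k / (risingFac C k * (Nat.factorial k : ℝ)) * x ^ k)
    (q := fun k => ((A + k) / (C + k)) * ((B + k) / ((k : ℝ) + 1)) * x) ?_ ?_ hx1 ?_
  · intro k
    have h1 := risingFac_pos hA k
    have h2 := risingFac_pos hB k
    have h3 := risingFac_pos hC k
    have h4 : (0 : ℝ) < (Nat.factorial k : ℝ) := by positivity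
    positivity
  · intro k
    have h3 : risingFac C k ≠ 0 := (risingFac_pos hC k).ne'
    have h4 : ((Nat.factorial k : ℝ)) ≠ 0 := by positivity
    have h5 : C + (k : ℝ) ≠ 0 := by positivity
    have h6 : (k : ℝ) + 1 ≠ 0 := by positivity
    beta_reduce
    rw [risingFac_succ, risingFac_succ, risingFac_succ, Nat.factorial_succ, pow_succ]
    push_cast
    field_simp
  · have h1 := tendsto_shift_div (A := A) hC
    have h2 := tendsto_shift_div (A := B) (C := (1 : ℝ)) one_pos
    have h2' : Tendsto (fun k : ℕ => (B + k) / ((k : ℝ) + 1)) atTop (nhds 1) := by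
      refine h2.congr fun k => by rw [add_comm (1 : ℝ) (k : ℝ)]
    have := (h1.mul h2').mul (tendsto_const_nhds (x := x))
    simpa using this

lemma summable_conf {A C z : ℝ} (hA : 0 < A) (hC : 0 < C) (hz : 0 ≤ z) :
    Summable (fun k : ℕ =>
      risingFac A k / (risingFac C k * (Nat.factorial k : ℝ)) * z ^ k) := by
  refine summable_of_ratio_aux (f := fun k =>
      risingFac A k / (risingFac C k * (Nat.factorial k : ℝ)) * z ^ k)
    (q := fun k => ((A + k) / (C + k)) * (z / ((k : ℝ) + 1))) (x := 0) ?_ ?_ one_pos ?_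
  · intro k
    have h1 := risingFac_pos hA k
    have h3 := risingFac_pos hC k
    have h4 : (0 : ℝ) < (Nat.factorial k : ℝ) := by positivity
    positivity
  · intro k
    have h3 : risingFac C k ≠ 0 := (risingFac_pos hC k).ne'
    have h4 : ((Nat.factorial k : ℝ)) ≠ 0 := by positivity
    have h5 : C + (k : ℝ) ≠ 0 := by positivity
    have h6 : (k : ℝ) + 1 ≠ 0 := by positivity
    beta_reduce
    rw [risingFac_succ, risingFac_succ, Nat.factorial_succ, pow_succ]
    push_cast
    field_simp
  · have h1 := tendsto_shift_div (A := A) hC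
    have h0 : Tendsto (fun k : ℕ => z / ((k : ℝ) + 1)) atTop (nhds 0) :=
      Tendsto.div_atTop tendsto_const_nhds
        (tendsto_atTop_add_const_right _ 1 tendsto_natCast_atTop_atTop)
    simpa using h1.mul h0

/-- The basic even-power integrand. -/
noncomputable def eF (α R : ℝ) (k : ℕ) (l : ℝ) : ℝ :=
  (l ^ 2) ^ R * l ^ (2 * k) * Real.exp (-(α * l ^ 2))

lemma eF_nonneg {l : ℝ} (hl : 0 ≤ l) (α R : ℝ) (k : ℕ) : 0 ≤ eF α R k l := by
  unfold eF
  have h1 : (0 : ℝ) ≤ (l ^ 2) ^ R := Real.rpow_nonneg (sq_nonneg l) R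
  have h2 : (0 : ℝ) ≤ l ^ (2 * k) := pow_nonneg hl _
  positivity

lemma aux_even {l : ℝ} (hl0 : 0 < l) (R : ℝ) (k : ℕ) :
    (l ^ 2) ^ R * l ^ (2 * k) = l ^ (2 * R + 2 * (k : ℝ)) := by
  rw [show ((l : ℝ) ^ 2) = l ^ ((2 : ℝ)) from (Real.rpow_two l).symm,
    ← Real.rpow_natCast l (2 * k), ← Real.rpow_mul hl0.le, ← Real.rpow_add hl0]
  congr 1
  push_cast
  ring

lemma exp_sq_eq (α l : ℝ) : Real.exp (-(α * l ^ 2)) = Real.exp (-α * l ^ (2 : ℝ)) := by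
  rw [Real.rpow_two]; ring_nf

lemma int_even {α R : ℝ} (hα : 0 < α) (hR : 0 < R) (k : ℕ) :
    ∫ l in Set.Ioi (0 : ℝ), eF α R k l =
      (1 / 2) * α ^ (-(R + (k : ℝ) + 1 / 2)) * Real.Gamma (R + (k : ℝ) + 1 / 2) := by
  have key : ∀ l ∈ Set.Ioi (0 : ℝ),
      eF α R k l = l ^ (2 * R + 2 * (k : ℝ)) * Real.exp (-α * l ^ (2 : ℝ)) := by
    intro l hl
    rw [eF, aux_even hl R k, exp_sq_eq]
  rw [setIntegral_congr_fun measurableSet_Ioi key,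
    integral_rpow_mul_exp_neg_mul_rpow two_pos (by linarith) hα]
  rw [show -(2 * R + 2 * (k : ℝ) + 1) / 2 = -(R + (k : ℝ) + 1 / 2) by ring,
    show (2 * R + 2 * (k : ℝ) + 1) / 2 = R + (k : ℝ) + 1 / 2 by ring]
  ring

lemma int_odd {α R : ℝ} (hα : 0 < α) (hR : 0 < R) (k : ℕ) :
    ∫ l in Set.Ioi (0 : ℝ), l * eF α R k l =
      (1 / 2) * α ^ (-(R + (k : ℝ) + 1)) * Real.Gamma (R + (k : ℝ) + 1) := by
  have key : ∀ l ∈ Set.Ioi (0 : ℝ),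
      l * eF α R k l = l ^ (2 * R + 2 * (k : ℝ) + 1) * Real.exp (-α * l ^ (2 : ℝ)) := by
    intro l hl
    have hl0 : (0 : ℝ) < l := hl
    rw [eF, aux_even hl0 R k, exp_sq_eq, Real.rpow_add hl0 _ 1, Real.rpow_one]
    ring
  rw [setIntegral_congr_fun measurableSet_Ioi key,
    integral_rpow_mul_exp_neg_mul_rpow two_pos (by linarith) hα]
  rw [show -(2 * R + 2 * (k : ℝ) + 1 + 1) / 2 = -(R + (k : ℝ) + 1) by ring,
    show (2 * R + 2 * (k : ℝ) + 1 + 1) / 2 = R + (k : ℝ) + 1 by ring]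
  ring

lemma intg_even {α R : ℝ} (hα : 0 < α) (hR : 0 < R) (k : ℕ) :
    IntegrableOn (eF α R k) (Set.Ioi (0 : ℝ)) := by
  refine ((integrableOn_rpow_mul_exp_neg_mul_sq hα
      (s := 2 * R + 2 * (k : ℝ)) (by linarith)).congr_fun ?_ measurableSet_Ioi)
  intro l hl
  have hl0 : (0 : ℝ) < l := hl
  beta_reduce
  rw [eF, aux_even hl0 R k]
  congr 1
  rw [neg_mul]

lemma intg_odd {α R : ℝ} (hα : 0 < α) (hR : 0 < R) (k : ℕ) :
    IntegrableOn (fun l => l * eF α R k l) (Set.Ioi (0 : ℝ)) := by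
  refine ((integrableOn_rpow_mul_exp_neg_mul_sq hα
      (s := 2 * R + 2 * (k : ℝ) + 1) (by linarith)).congr_fun ?_ measurableSet_Ioi)
  intro l hl
  have hl0 : (0 : ℝ) < l := hl
  beta_reduce
  rw [eF, aux_even hl0 R k, Real.rpow_add hl0 _ 1, Real.rpow_one, neg_mul]
  ring

/-- Theorem 2.4: one-sided `t` Bayes factor. -/
theorem one_sided_t_bayes_factor (ν τ r t y c : ℝ) (hν : 0 < ν) (hτ : 0 < τ) (hr : 1 ≤ r)
    (hy : y = τ * t / Real.sqrt ((ν + t ^ 2) * (1 + τ ^ 2)))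
    (hc : c = (1 + τ ^ 2) ^ (-(r + 1 / 2))) :
    ∫ l in Set.Ioi (0 : ℝ), nctPdf ν l t * normalMomentPdfPos τ r l
      = tPdf ν t * c *
          (twoF1 ((ν + 1) / 2) (r + 1 / 2) (1 / 2) (y ^ 2)
            + 2 * y * (Real.Gamma (ν / 2 + 1) / Real.Gamma ((ν + 1) / 2)) *
                (Real.Gamma (r + 1) / Real.Gamma (r + 1 / 2)) *
                twoF1 (ν / 2 + 1) (r + 1) (3 / 2) (y ^ 2)) := by
  have hr' : (0 : ℝ) < r := lt_of_lt_of_le one_pos hr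
  have hτ2 : (0 : ℝ) < 2 * τ ^ 2 := by positivity
  have h1τ : (0 : ℝ) < 1 + τ ^ 2 := by positivity
  have htν : (0 : ℝ) < t ^ 2 + ν := by positivity
  have hΓhalf : 0 < Real.Gamma (r + 1 / 2) := Real.Gamma_pos_of_pos (by linarith)
  have hΓν2 : 0 < Real.Gamma ((ν + 1) / 2) := Real.Gamma_pos_of_pos (by linarith)
  set α : ℝ := (1 + τ ^ 2) / (2 * τ ^ 2) with hαdef
  have hα : 0 < α := by positivity
  set w : ℝ := t ^ 2 / (2 * (t ^ 2 + ν)) with hwdef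
  have hw : 0 ≤ w := by positivity
  set X : ℝ := w / α with hXdef
  have hX0 : 0 ≤ X := div_nonneg hw hα.le
  have hX1 : X < 1 := by
    rw [hXdef, div_lt_one hα, hwdef, hαdef, div_lt_div_iff₀ (by positivity) (by positivity)]
    nlinarith [sq_nonneg t, sq_nonneg τ, mul_nonneg hν.le (sq_nonneg τ)]
  have hyX : y ^ 2 = X := by
    have h1 : ((ν + t ^ 2) * (1 + τ ^ 2)) ≠ 0 := by positivity
    have h2 : (2 * (t ^ 2 + ν) : ℝ) ≠ 0 := by positivity
    have h3 : (1 + τ ^ 2 : ℝ) ≠ 0 := by positivity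
    have h4 : (2 * τ ^ 2 : ℝ) ≠ 0 := by positivity
    rw [hy, hXdef, hwdef, hαdef, div_pow, mul_pow, Real.sq_sqrt (by positivity)]
    field_simp
    ring
  set a : ℕ → ℝ :=
    fun k => risingFac ((ν + 1) / 2) k / (risingFac (1 / 2) k * (Nat.factorial k : ℝ)) with hadef
  set b : ℕ → ℝ :=
    fun k => risingFac (ν / 2 + 1) k / (risingFac (3 / 2) k * (Nat.factorial k : ℝ)) with hbdef
  have ha0 : ∀ k, 0 ≤ a k := by
    intro k
    have h1 := risingFac_pos (show (0:ℝ) < (ν + 1) / 2 by linarith) k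
    have h2 := risingFac_pos (show (0:ℝ) < 1 / 2 by norm_num) k
    have h3 : (0 : ℝ) < (Nat.factorial k : ℝ) := by positivity
    exact le_of_lt (div_pos h1 (mul_pos h2 h3))
  have hb0 : ∀ k, 0 ≤ b k := by
    intro k
    have h1 := risingFac_pos (show (0:ℝ) < ν / 2 + 1 by linarith) k
    have h2 := risingFac_pos (show (0:ℝ) < 3 / 2 by norm_num) k
    have h3 : (0 : ℝ) < (Nat.factorial k : ℝ) := by positivity
    exact le_of_lt (div_pos h1 (mul_pos h2 h3))
  set K : ℝ := (2 * τ ^ 2) ^ (r + 1 / 2) * Real.Gamma (r + 1 / 2) with hKdef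
  have hK : 0 < K := mul_pos (Real.rpow_pos_of_pos hτ2 _) hΓhalf
  set C : ℝ := Real.sqrt 2 * t * Real.Gamma (ν / 2 + 1) /
      (Real.sqrt (t ^ 2 + ν) * Real.Gamma ((ν + 1) / 2)) with hCdef
  -- pointwise summability
  have sF : ∀ l : ℝ, Summable (fun k : ℕ => (2 / K * (a k * w ^ k)) * eF α r k l) := by
    intro l
    refine ((summable_conf (A := (ν + 1) / 2) (C := 1 / 2) (z := w * l ^ 2)
        (by linarith) (by norm_num) (by positivity)).mul_left
        (2 / K * ((l ^ 2) ^ r * Real.exp (-(α * l ^ 2))))).congr fun k => ?_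
    simp only [hadef, eF]
    ring
  have sG : ∀ l : ℝ, Summable (fun k : ℕ => (2 / K * C * (b k * w ^ k)) * (l * eF α r k l)) := by
    intro l
    refine ((summable_conf (A := ν / 2 + 1) (C := 3 / 2) (z := w * l ^ 2)
        (by linarith) (by norm_num) (by positivity)).mul_left
        (2 / K * C * (l * ((l ^ 2) ^ r * Real.exp (-(α * l ^ 2)))))).congr fun k => ?_
    simp only [hbdef, eF]
    ring
  -- the two inner sums rewritten
  have hSF : ∀ l : ℝ, (∑' k : ℕ, (2 / K * (a k * w ^ k)) * eF α r k l)
      = (2 / K * ((l ^ 2) ^ r * Real.exp (-(α * l ^ 2)))) *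
        ∑' k : ℕ, (risingFac ((ν + 1) / 2) k / (risingFac (1 / 2) k * (Nat.factorial k : ℝ))) *
          (l ^ 2 * t ^ 2 / (2 * (t ^ 2 + ν))) ^ k := by
    intro l
    rw [← tsum_mul_left]
    refine tsum_congr fun k => ?_
    simp only [hadef, eF, hwdef]
    ring
  have hSG : ∀ l : ℝ, (∑' k : ℕ, (2 / K * C * (b k * w ^ k)) * (l * eF α r k l))
      = (2 / K * C * (l * ((l ^ 2) ^ r * Real.exp (-(α * l ^ 2))))) *
        ∑' k : ℕ, (risingFac (ν / 2 + 1) k / (risingFac (3 / 2) k * (Nat.factorial k : ℝ))) *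
          (l ^ 2 * t ^ 2 / (2 * (t ^ 2 + ν))) ^ k := by
    intro l
    rw [← tsum_mul_left]
    refine tsum_congr fun k => ?_
    simp only [hbdef, eF, hwdef]
    ring
  -- pointwise identity of integrands on (0, ∞)
  have hexp : ∀ l : ℝ, Real.exp (-(α * l ^ 2)) =
      Real.exp (-l ^ 2 / 2) * Real.exp (-l ^ 2 / (2 * τ ^ 2)) := by
    intro l
    rw [← Real.exp_add]
    congr 1
    rw [hαdef]
    field_simp
    ring
  have hpt : ∀ l ∈ Set.Ioi (0 : ℝ),
      nctPdf ν l t * normalMomentPdfPos τ r l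
        = tPdf ν t * ∑' k : ℕ,
            ((2 / K * (a k * w ^ k)) * eF α r k l
              + (2 / K * C * (b k * w ^ k)) * (l * eF α r k l)) := by
    intro l hl
    rw [Summable.tsum_add (sF l) (sG l), hSF l, hSG l]
    simp only [nctPdf, normalMomentPdfPos, normalMomentPdf, hKdef, hexp l]
    rw [show Real.sqrt 2 * l * t * Real.Gamma (ν / 2 + 1) /
        (Real.sqrt (t ^ 2 + ν) * Real.Gamma ((ν + 1) / 2)) = C * l from by rw [hCdef]; ring]
    ring
  -- integrability
  have hFint : ∀ k : ℕ, IntegrableOn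
      (fun l : ℝ => (2 / K * (a k * w ^ k)) * eF α r k l) (Set.Ioi 0) :=
    fun k => (intg_even hα hr' k).const_mul _
  have hGint : ∀ k : ℕ, IntegrableOn
      (fun l : ℝ => (2 / K * C * (b k * w ^ k)) * (l * eF α r k l)) (Set.Ioi 0) :=
    fun k => (intg_odd hα hr' k).const_mul _
  have hHint : ∀ k : ℕ, IntegrableOn
      (fun l : ℝ => (2 / K * (a k * w ^ k)) * eF α r k l
        + (2 / K * C * (b k * w ^ k)) * (l * eF α r k l)) (Set.Ioi 0) :=
    fun k => (hFint k).add (hGint k)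
  -- values of the integrals
  have hIF : ∀ k : ℕ, (∫ l in Set.Ioi (0:ℝ), (2 / K * (a k * w ^ k)) * eF α r k l)
      = (2 / K * (a k * w ^ k)) *
        ((1 / 2) * α ^ (-(r + (k:ℝ) + 1 / 2)) * Real.Gamma (r + (k:ℝ) + 1 / 2)) := by
    intro k
    rw [MeasureTheory.integral_const_mul, int_even hα hr' k]
  have hIG : ∀ k : ℕ, (∫ l in Set.Ioi (0:ℝ), (2 / K * C * (b k * w ^ k)) * (l * eF α r k l))
      = (2 / K * C * (b k * w ^ k)) *
        ((1 / 2) * α ^ (-(r + (k:ℝ) + 1)) * Real.Gamma (r + (k:ℝ) + 1)) := by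
    intro k
    rw [MeasureTheory.integral_const_mul, int_odd hα hr' k]
  -- rewriting the values as hypergeometric terms
  have keyF : ∀ (d : ℝ) (k : ℕ),
      (d * (a k * w ^ k)) *
          ((1 / 2) * α ^ (-(r + (k:ℝ) + 1 / 2)) * Real.Gamma (r + (k:ℝ) + 1 / 2))
        = (d * (1 / 2) * α ^ (-(r + 1 / 2)) * Real.Gamma (r + 1 / 2)) *
          (risingFac ((ν + 1) / 2) k * risingFac (r + 1 / 2) k /
            (risingFac (1 / 2) k * (Nat.factorial k : ℝ)) * X ^ k) := by
    intro d k
    have eα : α ^ (-(r + (k:ℝ) + 1 / 2)) = α ^ (-(r + 1 / 2)) * ((α : ℝ) ^ k)⁻¹ := by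
      rw [show -(r + (k:ℝ) + 1 / 2) = -(r + 1 / 2) + -(k:ℝ) by ring, Real.rpow_add hα,
        Real.rpow_neg hα.le ((k:ℝ)), Real.rpow_natCast]
    have eΓ : Real.Gamma (r + (k:ℝ) + 1 / 2) = Real.Gamma (r + 1 / 2) * risingFac (r + 1 / 2) k := by
      rw [show r + (k:ℝ) + 1 / 2 = (r + 1 / 2) + (k:ℝ) by ring]
      exact Gamma_risingFac (by linarith) k
    rw [eα, eΓ]
    simp only [hadef, hXdef]
    ring
  have keyG : ∀ (d : ℝ) (k : ℕ),
      (d * (b k * w ^ k)) *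
          ((1 / 2) * α ^ (-(r + (k:ℝ) + 1)) * Real.Gamma (r + (k:ℝ) + 1))
        = (d * (1 / 2) * α ^ (-(r + 1)) * Real.Gamma (r + 1)) *
          (risingFac (ν / 2 + 1) k * risingFac (r + 1) k /
            (risingFac (3 / 2) k * (Nat.factorial k : ℝ)) * X ^ k) := by
    intro d k
    have eα : α ^ (-(r + (k:ℝ) + 1)) = α ^ (-(r + 1)) * ((α : ℝ) ^ k)⁻¹ := by
      rw [show -(r + (k:ℝ) + 1) = -(r + 1) + -(k:ℝ) by ring, Real.rpow_add hα,
        Real.rpow_neg hα.le ((k:ℝ)), Real.rpow_natCast]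
    have eΓ : Real.Gamma (r + (k:ℝ) + 1) = Real.Gamma (r + 1) * risingFac (r + 1) k := by
      rw [show r + (k:ℝ) + 1 = (r + 1) + (k:ℝ) by ring]
      exact Gamma_risingFac (by linarith) k
    rw [eα, eΓ]
    simp only [hbdef, hXdef]
    ring
  -- summability of the hypergeometric series
  have sHF : Summable (fun k : ℕ => risingFac ((ν + 1) / 2) k * risingFac (r + 1 / 2) k /
      (risingFac (1 / 2) k * (Nat.factorial k : ℝ)) * X ^ k) :=
    summable_hyp (by linarith) (by linarith) (by norm_num) hX0 hX1
  have sHG : Summable (fun k : ℕ => risingFac (ν / 2 + 1) k * risingFac (r + 1) k /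
      (risingFac (3 / 2) k * (Nat.factorial k : ℝ)) * X ^ k) :=
    summable_hyp (by linarith) (by linarith) (by norm_num) hX0 hX1
  -- norm integrals
  have hNF : ∀ k : ℕ, (∫ l in Set.Ioi (0:ℝ), ‖(2 / K * (a k * w ^ k)) * eF α r k l‖)
      = (2 / K * (a k * w ^ k)) *
        ((1 / 2) * α ^ (-(r + (k:ℝ) + 1 / 2)) * Real.Gamma (r + (k:ℝ) + 1 / 2)) := by
    intro k
    rw [← hIF k]
    refine setIntegral_congr_fun measurableSet_Ioi fun l hl => ?_
    have hl0 : (0:ℝ) < l := hl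
    have h1 : (0:ℝ) ≤ 2 / K * (a k * w ^ k) :=
      mul_nonneg (by positivity) (mul_nonneg (ha0 k) (pow_nonneg hw k))
    exact Real.norm_of_nonneg (mul_nonneg h1 (eF_nonneg hl0.le α r k))
  have hNG : ∀ k : ℕ, (∫ l in Set.Ioi (0:ℝ), ‖(2 / K * C * (b k * w ^ k)) * (l * eF α r k l)‖)
      = (|2 / K * C| * (b k * w ^ k)) *
        ((1 / 2) * α ^ (-(r + (k:ℝ) + 1)) * Real.Gamma (r + (k:ℝ) + 1)) := by
    intro k
    rw [show (|2 / K * C| * (b k * w ^ k)) *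
        ((1 / 2) * α ^ (-(r + (k:ℝ) + 1)) * Real.Gamma (r + (k:ℝ) + 1))
      = |2 / K * C| * (b k * w ^ k) * ∫ l in Set.Ioi (0:ℝ), l * eF α r k l from by
        rw [int_odd hα hr' k]]
    rw [← MeasureTheory.integral_const_mul]
    refine setIntegral_congr_fun measurableSet_Ioi fun l hl => ?_
    have hl0 : (0:ℝ) < l := hl
    have hbw : (0:ℝ) ≤ b k * w ^ k := mul_nonneg (hb0 k) (pow_nonneg hw k)
    have hle : (0:ℝ) ≤ l * eF α r k l := mul_nonneg hl0.le (eF_nonneg hl0.le α r k)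
    rw [Real.norm_eq_abs, abs_mul, abs_of_nonneg hle, abs_mul, abs_of_nonneg hbw]
  -- summability of the norm integrals
  have hHsum : Summable (fun k : ℕ => ∫ l in Set.Ioi (0:ℝ),
      ‖(2 / K * (a k * w ^ k)) * eF α r k l
        + (2 / K * C * (b k * w ^ k)) * (l * eF α r k l)‖) := by
    refine Summable.of_nonneg_of_le (fun k => integral_nonneg fun l => norm_nonneg _)
      (fun k => ?_)
      (((sHF.mul_left (2 / K * (1 / 2) * α ^ (-(r + 1 / 2)) * Real.Gamma (r + 1 / 2))).add
        (sHG.mul_left (|2 / K * C| * (1 / 2) * α ^ (-(r + 1)) * Real.Gamma (r + 1)))))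
    calc (∫ l in Set.Ioi (0:ℝ), ‖(2 / K * (a k * w ^ k)) * eF α r k l
          + (2 / K * C * (b k * w ^ k)) * (l * eF α r k l)‖)
        ≤ ∫ l in Set.Ioi (0:ℝ), (‖(2 / K * (a k * w ^ k)) * eF α r k l‖
          + ‖(2 / K * C * (b k * w ^ k)) * (l * eF α r k l)‖) := by
          refine integral_mono ((hHint k).norm) ((hFint k).norm.add ((hGint k).norm))
            fun l => norm_add_le _ _
      _ = (∫ l in Set.Ioi (0:ℝ), ‖(2 / K * (a k * w ^ k)) * eF α r k l‖)
          + ∫ l in Set.Ioi (0:ℝ), ‖(2 / K * C * (b k * w ^ k)) * (l * eF α r k l)‖ :=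
          integral_add (hFint k).norm (hGint k).norm
      _ = (2 / K * (1 / 2) * α ^ (-(r + 1 / 2)) * Real.Gamma (r + 1 / 2)) *
            (risingFac ((ν + 1) / 2) k * risingFac (r + 1 / 2) k /
              (risingFac (1 / 2) k * (Nat.factorial k : ℝ)) * X ^ k)
          + (|2 / K * C| * (1 / 2) * α ^ (-(r + 1)) * Real.Gamma (r + 1)) *
            (risingFac (ν / 2 + 1) k * risingFac (r + 1) k /
              (risingFac (3 / 2) k * (Nat.factorial k : ℝ)) * X ^ k) := by
          rw [hNF k, hNG k, keyF _ k, keyG _ k]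
  -- the interchange
  have hswap := MeasureTheory.integral_tsum_of_summable_integral_norm
    (F := fun (k : ℕ) (l : ℝ) => (2 / K * (a k * w ^ k)) * eF α r k l
      + (2 / K * C * (b k * w ^ k)) * (l * eF α r k l))
    (μ := volume.restrict (Set.Ioi 0)) hHint hHsum
  -- final constants
  have hcF : 2 / K * (1 / 2) * α ^ (-(r + 1 / 2)) * Real.Gamma (r + 1 / 2) = c := by
    have h1 : (1 + τ ^ 2 : ℝ) = (2 * τ ^ 2) * α := by rw [hαdef]; field_simp
    have h2 : ((2 * τ ^ 2 : ℝ)) ^ (r + 1 / 2) ≠ 0 := (Real.rpow_pos_of_pos hτ2 _).ne'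
    rw [hc, h1, Real.mul_rpow hτ2.le hα.le, hKdef, Real.rpow_neg hτ2.le]
    field_simp
  have hαhalf : α ^ (-(1 / 2) : ℝ) = (Real.sqrt α)⁻¹ := by
    rw [Real.rpow_neg hα.le, ← Real.sqrt_eq_rpow]
  have hs1 : Real.sqrt ((ν + t ^ 2) * (1 + τ ^ 2))
      = Real.sqrt (t ^ 2 + ν) * Real.sqrt (1 + τ ^ 2) := by
    rw [show ν + t ^ 2 = t ^ 2 + ν from add_comm _ _, Real.sqrt_mul htν.le]
  have hsα : Real.sqrt α = Real.sqrt (1 + τ ^ 2) / (Real.sqrt 2 * τ) := by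
    rw [hαdef, Real.sqrt_div h1τ.le, Real.sqrt_mul (by norm_num : (0:ℝ) ≤ 2), Real.sqrt_sq hτ.le]
  have hτ0 : τ ≠ 0 := hτ.ne'
  have hs2 : Real.sqrt 2 ≠ 0 := by positivity
  have hstν : Real.sqrt (t ^ 2 + ν) ≠ 0 := (Real.sqrt_pos.mpr htν).ne'
  have hs1τ : Real.sqrt (1 + τ ^ 2) ≠ 0 := (Real.sqrt_pos.mpr h1τ).ne'
  have h22 : Real.sqrt 2 * Real.sqrt 2 = 2 := Real.mul_self_sqrt (by norm_num)
  have hCα : C * (Real.sqrt α)⁻¹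
      = 2 * y * (Real.Gamma (ν / 2 + 1) / Real.Gamma ((ν + 1) / 2)) := by
    rw [hCdef, hsα, hy, hs1, inv_div, div_mul_div_comm,
      show Real.sqrt 2 * t * Real.Gamma (ν / 2 + 1) * (Real.sqrt 2 * τ)
          = (Real.sqrt 2 * Real.sqrt 2) * (t * Real.Gamma (ν / 2 + 1) * τ) from by ring, h22]
    field_simp
  have hcG : 2 / K * C * (1 / 2) * α ^ (-(r + 1)) * Real.Gamma (r + 1)
      = c * (2 * y * (Real.Gamma (ν / 2 + 1) / Real.Gamma ((ν + 1) / 2)) *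
          (Real.Gamma (r + 1) / Real.Gamma (r + 1 / 2))) := by
    have hsplit : α ^ (-(r + 1) : ℝ) = α ^ (-(r + 1 / 2)) * α ^ (-(1 / 2) : ℝ) := by
      rw [← Real.rpow_add hα]; congr 1; ring
    rw [hsplit, hαhalf, ← hcF, ← hCα]
    field_simp
  -- the per-index value of the integral
  have hfinal : ∀ k : ℕ, (∫ l in Set.Ioi (0:ℝ),
      ((2 / K * (a k * w ^ k)) * eF α r k l
        + (2 / K * C * (b k * w ^ k)) * (l * eF α r k l)))
      = (2 / K * (1 / 2) * α ^ (-(r + 1 / 2)) * Real.Gamma (r + 1 / 2)) *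
          (risingFac ((ν + 1) / 2) k * risingFac (r + 1 / 2) k /
            (risingFac (1 / 2) k * (Nat.factorial k : ℝ)) * X ^ k)
        + (2 / K * C * (1 / 2) * α ^ (-(r + 1)) * Real.Gamma (r + 1)) *
          (risingFac (ν / 2 + 1) k * risingFac (r + 1) k /
            (risingFac (3 / 2) k * (Nat.factorial k : ℝ)) * X ^ k) := by
    intro k
    rw [MeasureTheory.integral_add (hFint k) (hGint k), hIF k, hIG k, keyF _ k, keyG _ k]
  rw [hyX]
  calc ∫ l in Set.Ioi (0 : ℝ), nctPdf ν l t * normalMomentPdfPos τ r l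
      = ∫ l in Set.Ioi (0 : ℝ), tPdf ν t * ∑' k : ℕ,
          ((2 / K * (a k * w ^ k)) * eF α r k l
            + (2 / K * C * (b k * w ^ k)) * (l * eF α r k l)) :=
        setIntegral_congr_fun measurableSet_Ioi hpt
    _ = tPdf ν t * ∫ l in Set.Ioi (0 : ℝ), ∑' k : ℕ,
          ((2 / K * (a k * w ^ k)) * eF α r k l
            + (2 / K * C * (b k * w ^ k)) * (l * eF α r k l)) :=
        MeasureTheory.integral_const_mul _ _
    _ = tPdf ν t * ∑' k : ℕ, ∫ l in Set.Ioi (0:ℝ),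
          ((2 / K * (a k * w ^ k)) * eF α r k l
            + (2 / K * C * (b k * w ^ k)) * (l * eF α r k l)) := by rw [← hswap]
    _ = tPdf ν t * ((2 / K * (1 / 2) * α ^ (-(r + 1 / 2)) * Real.Gamma (r + 1 / 2)) *
            twoF1 ((ν + 1) / 2) (r + 1 / 2) (1 / 2) X
          + (2 / K * C * (1 / 2) * α ^ (-(r + 1)) * Real.Gamma (r + 1)) *
            twoF1 (ν / 2 + 1) (r + 1) (3 / 2) X) := by
        rw [tsum_congr hfinal,
          Summable.tsum_add (sHF.mul_left (2 / K * (1 / 2) * α ^ (-(r + 1 / 2)) * Real.Gamma (r + 1 / 2)))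
            (sHG.mul_left (2 / K * C * (1 / 2) * α ^ (-(r + 1)) * Real.Gamma (r + 1))),
          tsum_mul_left, tsum_mul_left, twoF1, twoF1]
    _ = tPdf ν t * c *
          (twoF1 ((ν + 1) / 2) (r + 1 / 2) (1 / 2) X
            + 2 * y * (Real.Gamma (ν / 2 + 1) / Real.Gamma ((ν + 1) / 2)) *
                (Real.Gamma (r + 1) / Real.Gamma (r + 1 / 2)) *
                twoF1 (ν / 2 + 1) (r + 1) (3 / 2) X) := by
        rw [hcF, hcG]
        ring
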